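/- Let A ∈ ℝ^{m×n} with Goldman–Tucker partition B, N (so A_B x̂ = 0, A_N x̂ < 0 for some x̂, and A_Bᵀ ŷ_B = 0 for some ŷ_B > 0). Let L = {x : A_B x = 0} and K = {x : A_N x ≤ 0}. Then {x : A x ≤ 0} = L ∩ K and H₀(A) ≤ Ĥ(L,K) · max{H₀(A_N), H₀(A_B)}. -/

import Mathlib

lemma seminorm_upper {k : ℕ} (p : Seminorm ℝ (Fin k → ℝ)) :
    ∃ C : ℝ, 0 < C ∧ ∀ x, p x ≤ C * ‖x‖ := by
  refine ⟨(∑ i, p ((Pi.single i 1 : Fin k → ℝ))) + 1, by positivity, fun x => ?_⟩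
  have hx : x = ∑ i, x i • (Pi.single i 1 : Fin k → ℝ) := by
    ext j
    simp [Pi.single_apply, Finset.sum_apply]
  calc p x = p (∑ i, x i • (Pi.single i 1 : Fin k → ℝ)) := by rw [← hx]
    _ ≤ ∑ i, p (x i • (Pi.single i 1 : Fin k → ℝ)) := by
        classical
        have H : ∀ (s : Finset (Fin k)),
            p (∑ i ∈ s, x i • (Pi.single i 1 : Fin k → ℝ)) ≤
              ∑ i ∈ s, p (x i • (Pi.single i 1 : Fin k → ℝ)) := by
          intro s
          induction s using Finset.cons_induction with
          | empty => simp
          | cons a s ha ih =>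
            rw [Finset.sum_cons, Finset.sum_cons]
            exact le_trans (map_add_le_add p _ _) (by linarith)
        exact H Finset.univ
    _ ≤ ∑ i, ‖x‖ * p ((Pi.single i 1 : Fin k → ℝ)) := by
        apply Finset.sum_le_sum
        intro i _
        rw [map_smul_eq_mul]
        exact mul_le_mul_of_nonneg_right (by simpa using norm_le_pi_norm x i) (apply_nonneg _ _)
    _ = (∑ i, p ((Pi.single i 1 : Fin k → ℝ))) * ‖x‖ := by
        rw [Finset.sum_mul]; exact Finset.sum_congr rfl (fun i _ => mul_comm _ _)
    _ ≤ ((∑ i, p ((Pi.single i 1 : Fin k → ℝ))) + 1) * ‖x‖ := by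
        apply mul_le_mul_of_nonneg_right _ (norm_nonneg _)
        linarith



lemma seminorm_lower {k : ℕ} (p : Seminorm ℝ (Fin k → ℝ))
    (hp : ∀ x, p x = 0 → x = 0) :
    ∃ c : ℝ, 0 < c ∧ ∀ x, c * ‖x‖ ≤ p x := by
  rcases Nat.eq_zero_or_pos k with hk | hk
  · refine ⟨1, one_pos, fun x => ?_⟩
    subst hk
    have h0 : x = 0 := by ext i; exact absurd i.2 (by omega)
    rw [h0]
    rw [show ((0 : Fin 0 → ℝ)) = (0:Fin 0 → ℝ) from rfl]
    rw [one_mul, norm_zero, map_zero]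
  · obtain ⟨C, hC, hCb⟩ := seminorm_upper p
    -- p is continuous
    have hlip : LipschitzWith (Real.toNNReal C) p := by
      apply LipschitzWith.of_dist_le_mul
      intro x y
      rw [Real.dist_eq]
      have h1 : p x - p y ≤ p (x - y) := by
        have := map_add_le_add p (x - y) y
        simp at this; linarith
      have h2 : p y - p x ≤ p (x - y) := by
        have := map_add_le_add p (y - x) x
        have hrev : p (y - x) = p (x - y) := map_sub_rev p y x
        simp [hrev] at this; linarith
      have : |p x - p y| ≤ p (x - y) := abs_sub_le_iff.2 ⟨h1, h2⟩
      calc |p x - p y| ≤ p (x - y) := this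
        _ ≤ C * ‖x - y‖ := hCb _
        _ = Real.toNNReal C * dist x y := by
            rw [dist_eq_norm, Real.coe_toNNReal _ hC.le]
    have hcont : Continuous p := hlip.continuous
    have hne : (Metric.sphere (0 : Fin k → ℝ) 1).Nonempty := by
      have : Nontrivial (Fin k → ℝ) := by
        refine ⟨0, Function.const _ 1, ?_⟩
        intro h
        have := congrFun h ⟨0, hk⟩
        simp at this
      exact NormedSpace.sphere_nonempty.2 one_pos.le
    obtain ⟨x₀, hx₀mem, hx₀min⟩ :=
      (isCompact_sphere (0 : Fin k → ℝ) 1).exists_isMinOn hne hcont.continuousOn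
    have hx₀norm : ‖x₀‖ = 1 := by simpa using hx₀mem
    have hx₀ne : x₀ ≠ 0 := by intro h; rw [h] at hx₀norm; simp at hx₀norm
    have hc : 0 < p x₀ := by
      rcases (apply_nonneg p x₀).lt_or_eq with h | h
      · exact h
      · exact absurd (hp x₀ h.symm) hx₀ne
    refine ⟨p x₀, hc, fun x => ?_⟩
    rcases eq_or_ne x 0 with rfl | hx
    · simp
    · have hxn : 0 < ‖x‖ := norm_pos_iff.2 hx
      have hmem : ‖x‖⁻¹ • x ∈ Metric.sphere (0 : Fin k → ℝ) 1 := by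
        simp [norm_smul, abs_of_pos (inv_pos.2 hxn), inv_mul_cancel₀ hxn.ne']
      have hmin := hx₀min hmem
      have heq : p (‖x‖⁻¹ • x) = ‖x‖⁻¹ * p x := by
        rw [map_smul_eq_mul]; simp [abs_of_pos (inv_pos.2 hxn)]
      have hthis : p x₀ ≤ ‖x‖⁻¹ * p x := by
        have : p x₀ ≤ p (‖x‖⁻¹ • x) := hmin
        rwa [heq] at this
      calc p x₀ * ‖x‖ ≤ (‖x‖⁻¹ * p x) * ‖x‖ := by
            apply mul_le_mul_of_nonneg_right _ hxn.le
            exact hthis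
        _ = p x := by field_simp


noncomputable def dd {k : ℕ} (p : Seminorm ℝ (Fin k → ℝ)) (u : Fin k → ℝ)
    (S : Set (Fin k → ℝ)) : ℝ := sInf {s | ∃ x ∈ S, s = p (u - x)}

lemma dd_bddBelow {k : ℕ} (p : Seminorm ℝ (Fin k → ℝ)) (u : Fin k → ℝ)
    (S : Set (Fin k → ℝ)) : BddBelow {s | ∃ x ∈ S, s = p (u - x)} := by
  refine ⟨0, fun s hs => ?_⟩
  obtain ⟨x, _, rfl⟩ := hs
  exact apply_nonneg _ _

lemma dd_nonneg {k : ℕ} (p : Seminorm ℝ (Fin k → ℝ)) (u : Fin k → ℝ)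
    (S : Set (Fin k → ℝ)) : 0 ≤ dd p u S := by
  apply Real.sInf_nonneg
  rintro s ⟨x, _, rfl⟩
  exact apply_nonneg _ _

lemma dd_le {k : ℕ} (p : Seminorm ℝ (Fin k → ℝ)) (u : Fin k → ℝ)
    {S : Set (Fin k → ℝ)} {x : Fin k → ℝ} (hx : x ∈ S) : dd p u S ≤ p (u - x) :=
  csInf_le (dd_bddBelow p u S) ⟨x, hx, rfl⟩

lemma dd_zero_of_mem {k : ℕ} (p : Seminorm ℝ (Fin k → ℝ)) {u : Fin k → ℝ}
    {S : Set (Fin k → ℝ)} (hu : u ∈ S) : dd p u S = 0 :=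
  le_antisymm (by simpa using dd_le p u hu) (dd_nonneg p u S)

lemma dd_exists_near {k : ℕ} (p : Seminorm ℝ (Fin k → ℝ)) (u : Fin k → ℝ)
    {S : Set (Fin k → ℝ)} (hS : S.Nonempty) {ε : ℝ} (hε : 0 < ε) :
    ∃ x ∈ S, p (u - x) < dd p u S + ε := by
  obtain ⟨x0, hx0⟩ := hS
  have hne : {s | ∃ x ∈ S, s = p (u - x)}.Nonempty := ⟨p (u - x0), x0, hx0, rfl⟩
  have : dd p u S < dd p u S + ε := by linarith
  obtain ⟨s, ⟨x, hx, rfl⟩, hlt⟩ := exists_lt_of_csInf_lt hne this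
  exact ⟨x, hx, hlt⟩

lemma dd_pos {k : ℕ} (p : Seminorm ℝ (Fin k → ℝ)) (u : Fin k → ℝ)
    {S : Set (Fin k → ℝ)} (hS : S.Nonempty) (hcl : IsClosed S) (hu : u ∉ S)
    {c : ℝ} (hc : 0 < c) (hlb : ∀ x, c * ‖x‖ ≤ p x) : 0 < dd p u S := by
  rcases (dd_nonneg p u S).lt_or_eq with h | h
  · exact h
  · exfalso
    apply hu
    rw [← hcl.closure_eq]
    rw [Metric.mem_closure_iff]
    intro ε hε
    obtain ⟨x, hx, hlt⟩ := dd_exists_near p u hS (mul_pos hc hε)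
    refine ⟨x, hx, ?_⟩
    rw [← h] at hlt
    rw [zero_add] at hlt
    have := hlb (u - x)
    rw [dist_eq_norm]
    nlinarith

open Matrix

lemma gt_trick {m n : ℕ} (A : Matrix (Fin m) (Fin n) ℝ) (B : Finset (Fin m))
    (yhat : Fin m → ℝ) (hyhatpos : ∀ i ∈ B, 0 < yhat i)
    (hyhat0 : ∀ i ∉ B, yhat i = 0) (hyhat : A.transpose.mulVec yhat = 0)
    (x : Fin n → ℝ) (hx : ∀ i ∈ B, A.mulVec x i ≤ 0) :
    ∀ i ∈ B, A.mulVec x i = 0 := by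
  have hdot : yhat ⬝ᵥ A.mulVec x = 0 := by
    rw [Matrix.dotProduct_mulVec]
    rw [← Matrix.mulVec_transpose, hyhat]
    simp [dotProduct]
  have hsum : ∑ i ∈ B, yhat i * A.mulVec x i = 0 := by
    rw [← hdot]
    unfold dotProduct
    symm
    apply (Finset.sum_subset (Finset.subset_univ B) _).symm
    intro i _ hiB
    rw [hyhat0 i hiB, zero_mul]
  have hterm : ∀ i ∈ B, yhat i * A.mulVec x i = 0 := by
    intro i hi
    have hnonpos : ∀ j ∈ B, yhat j * A.mulVec x j ≤ 0 := fun j hj =>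
      mul_nonpos_of_nonneg_of_nonpos (hyhatpos j hj).le (hx j hj)
    by_contra hne
    have hlt : yhat i * A.mulVec x i < 0 := (hnonpos i hi).lt_of_ne hne
    have : ∑ j ∈ B, yhat j * A.mulVec x j < 0 :=
      Finset.sum_neg' hnonpos ⟨i, hi, hlt⟩
    linarith
  intro i hi
  have := hterm i hi
  rcases mul_eq_zero.1 this with h | h
  · exact absurd h (hyhatpos i hi).ne'
  · exact h

lemma mulVec_continuous {m n : ℕ} (A : Matrix (Fin m) (Fin n) ℝ) (i : Fin m) :
    Continuous fun x : Fin n → ℝ => A.mulVec x i := by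
  unfold Matrix.mulVec dotProduct
  exact continuous_finset_sum _ fun j _ => (continuous_const.mul (continuous_apply j))


lemma exists_section {m n : ℕ} (T : (Fin n → ℝ) →ₗ[ℝ] (Fin m → ℝ)) :
    ∃ S : (Fin m → ℝ) →ₗ[ℝ] (Fin n → ℝ), ∀ x, T (S (T x)) = T x := by
  obtain ⟨q, hq⟩ := Submodule.exists_isCompl (LinearMap.range T)
  obtain ⟨g, hg⟩ := T.rangeRestrict.exists_rightInverse_of_surjective
    (LinearMap.range_eq_top.2 T.surjective_rangeRestrict)
  set proj := (LinearMap.range T).linearProjOfIsCompl q hq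
  refine ⟨g.comp proj, fun x => ?_⟩
  have h1 : proj (T x) = ⟨T x, LinearMap.mem_range_self T x⟩ := by
    exact Submodule.linearProjOfIsCompl_apply_left hq ⟨T x, LinearMap.mem_range_self T x⟩
  simp only [LinearMap.comp_apply, h1]
  have h2 := LinearMap.congr_fun hg ⟨T x, LinearMap.mem_range_self T x⟩
  simp only [LinearMap.comp_apply, LinearMap.id_apply] at h2
  have h3 : T (g ⟨T x, LinearMap.mem_range_self T x⟩) =
      (T.rangeRestrict (g ⟨T x, LinearMap.mem_range_self T x⟩) : Fin m → ℝ) := rfl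
  rw [h3, h2]


open Matrix

lemma gt_sum {m n : ℕ} (A : Matrix (Fin m) (Fin n) ℝ) (B : Finset (Fin m))
    (yhat : Fin m → ℝ)
    (hyhat0 : ∀ i ∉ B, yhat i = 0) (hyhat : A.transpose.mulVec yhat = 0)
    (x : Fin n → ℝ) :
    ∑ i ∈ B, yhat i * A.mulVec x i = 0 := by
  have hdot : yhat ⬝ᵥ A.mulVec x = 0 := by
    rw [Matrix.dotProduct_mulVec]
    rw [← Matrix.mulVec_transpose, hyhat]
    simp [dotProduct]
  rw [← hdot]
  unfold dotProduct
  apply Finset.sum_subset (Finset.subset_univ B)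
  intro i _ hiB
  rw [hyhat0 i hiB, zero_mul]

lemma row_bound {m n : ℕ} (A : Matrix (Fin m) (Fin n) ℝ)
    (nn : Seminorm ℝ (Fin n → ℝ)) (cn : ℝ) (hcn : 0 < cn)
    (hlb : ∀ x, cn * ‖x‖ ≤ nn x) (i : Fin m) (v : Fin n → ℝ) :
    |A.mulVec v i| ≤ ((∑ i, ∑ j, |A i j|) / cn) * nn v := by
  have h1 : |A.mulVec v i| ≤ (∑ j, |A i j|) * ‖v‖ := by
    unfold Matrix.mulVec dotProduct
    calc |∑ j, A i j * v j| ≤ ∑ j, |A i j * v j| := Finset.abs_sum_le_sum_abs _ _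
      _ ≤ ∑ j, |A i j| * ‖v‖ := by
          apply Finset.sum_le_sum
          intro j _
          rw [abs_mul]
          exact mul_le_mul_of_nonneg_left (by simpa using norm_le_pi_norm v j) (abs_nonneg _)
      _ = (∑ j, |A i j|) * ‖v‖ := by rw [Finset.sum_mul]
  have h2 : (∑ j, |A i j|) ≤ ∑ i, ∑ j, |A i j| := by
    apply Finset.single_le_sum (f := fun i => ∑ j, |A i j|) _ (Finset.mem_univ i)
    intro k _
    positivity
  have h3 : ‖v‖ ≤ nn v / cn := by
    rw [le_div_iff₀ hcn]
    linarith [hlb v]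
  calc |A.mulVec v i| ≤ (∑ j, |A i j|) * ‖v‖ := h1
    _ ≤ (∑ i, ∑ j, |A i j|) * (nn v / cn) := by
        apply mul_le_mul h2 h3 (norm_nonneg _) (by positivity)
    _ = ((∑ i, ∑ j, |A i j|) / cn) * nn v := by ring

lemma seminorm_sub_le {k : ℕ} (p : Seminorm ℝ (Fin k → ℝ)) (x y : Fin k → ℝ) :
    p (x - y) ≤ p x + p y := by
  rw [sub_eq_add_neg]
  exact le_trans (map_add_le_add p x (-y)) (by rw [map_neg_eq_map])

lemma slide {m n : ℕ} (A : Matrix (Fin m) (Fin n) ℝ) (nn : Seminorm ℝ (Fin n → ℝ))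
    (N : Finset (Fin m)) (xL xh : Fin n → ℝ) (δ g : ℝ) (hδ : 0 < δ) (hg : 0 < g)
    (hxh : ∀ i ∈ N, A.mulVec xh i ≤ -δ) (hxL : ∀ i ∈ N, A.mulVec xL i ≤ g)
    (ε : ℝ) (hε : 0 < ε) :
    ∃ z : Fin n → ℝ, (∃ s t : ℝ, 0 ≤ s ∧ s ≤ 1 ∧ 0 ≤ t ∧
        z = (1-s) • xL + (s*t) • xh) ∧ (∀ i ∈ N, A.mulVec z i ≤ 0) ∧
      nn (xL - z) ≤ ε + g * nn xh / δ := by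
  set t : ℝ := g * nn xL / (δ * ε) + 1 with ht_def
  have ht : 0 < t := by positivity
  have htδ : 0 < t * δ := by positivity
  have hgt : 0 < g + t * δ := by linarith
  set s : ℝ := g / (g + t * δ) with hs_def
  have hs0 : 0 < s := by positivity
  have hs1 : s ≤ 1 := by rw [div_le_one hgt]; linarith
  refine ⟨(1-s) • xL + (s*t) • xh, ⟨s, t, hs0.le, hs1, ht.le, rfl⟩, ?_, ?_⟩
  · intro i hi
    have hAz : A.mulVec ((1-s) • xL + (s*t) • xh) i =
        (1-s) * A.mulVec xL i + (s*t) * A.mulVec xh i := by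
      rw [Matrix.mulVec_add, Matrix.mulVec_smul, Matrix.mulVec_smul]
      simp [smul_eq_mul]
    rw [hAz]
    have h1 : (1-s) * A.mulVec xL i ≤ (1-s) * g :=
      mul_le_mul_of_nonneg_left (hxL i hi) (by linarith)
    have h2 : (s*t) * A.mulVec xh i ≤ (s*t) * (-δ) :=
      mul_le_mul_of_nonneg_left (hxh i hi) (by positivity)
    have hcancel : s * (g + t * δ) = g := by
      rw [hs_def]; field_simp
    nlinarith
  · have hzeq : xL - ((1-s) • xL + (s*t) • xh) = s • (xL - t • xh) := by
      ext j
      simp [Pi.add_apply, Pi.smul_apply, smul_eq_mul, Pi.sub_apply]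
      ring
    rw [hzeq, map_smul_eq_mul]
    rw [Real.norm_eq_abs, abs_of_pos hs0]
    have htri : nn (xL - t • xh) ≤ nn xL + t * nn xh := by
      have := seminorm_sub_le nn xL (t • xh)
      rw [map_smul_eq_mul, Real.norm_eq_abs, abs_of_pos ht] at this
      exact this
    have hs_nnxL : s * nn xL ≤ ε := by
      rw [hs_def, div_mul_eq_mul_div, div_le_iff₀ hgt]
      have h1 : ε * (g + t * δ) = ε * g + ε * (t * δ) := by ring
      have h2 : g * nn xL ≤ ε * (t * δ) := by
        rw [ht_def]
        have : ε * ((g * nn xL / (δ * ε) + 1) * δ) = g * nn xL + ε * δ := by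
          field_simp
        rw [this]
        nlinarith
      nlinarith [apply_nonneg nn xL]
    have hst : s * t * nn xh ≤ g / δ * nn xh := by
      apply mul_le_mul_of_nonneg_right _ (apply_nonneg nn xh)
      rw [hs_def, div_mul_eq_mul_div, div_le_div_iff₀ hgt hδ]
      nlinarith
    calc s * nn (xL - t • xh) ≤ s * (nn xL + t * nn xh) :=
          mul_le_mul_of_nonneg_left htri hs0.le
      _ = s * nn xL + s * t * nn xh := by ring
      _ ≤ ε + g * nn xh / δ := by
          have heq : g / δ * nn xh = g * nn xh / δ := by ring
          rw [heq] at hst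
          linarith [hs_nnxL]
set_option maxHeartbeats 1000000 in
open Classical in
theorem stmt14 {m n : ℕ} (A : Matrix (Fin m) (Fin n) ℝ)
    (nn : Seminorm ℝ (Fin n → ℝ)) (nm : Seminorm ℝ (Fin m → ℝ))
    (hnn : ∀ x, nn x = 0 → x = 0) (hnm : ∀ y, nm y = 0 → y = 0)
    (hcompat : ∀ y z : Fin m → ℝ, (∀ i, |y i| ≤ |z i|) → nm y ≤ nm z)
    (B N : Finset (Fin m)) (hBN : B ∪ N = Finset.univ) (hdisj : B ∩ N = ∅)
    (xhat : Fin n → ℝ) (hB : ∀ i ∈ B, A.mulVec xhat i = 0)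
    (hN : ∀ i ∈ N, A.mulVec xhat i < 0)
    (yhat : Fin m → ℝ) (hyhatpos : ∀ i ∈ B, 0 < yhat i)
    (hyhat0 : ∀ i ∉ B, yhat i = 0) (hyhat : A.transpose.mulVec yhat = 0) :
    {x : Fin n → ℝ | ∀ i, A.mulVec x i ≤ 0} =
      {x | ∀ i ∈ B, A.mulVec x i = 0} ∩ {x | ∀ i ∈ N, A.mulVec x i ≤ 0} ∧
    sSup {r | ∃ u : Fin n → ℝ, (¬ ∀ i, A.mulVec u i ≤ 0) ∧
        r = sInf {s | ∃ x, (∀ i, A.mulVec x i ≤ 0) ∧ s = nn (u - x)} /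
          nm (fun i => max (A.mulVec u i) 0)} ≤
      sSup {r | ∃ u : Fin n → ℝ,
          u ∉ {x | ∀ i ∈ B, A.mulVec x i = 0} ∩ {x | ∀ i ∈ N, A.mulVec x i ≤ 0} ∧
          r = sInf {s | ∃ w ∈ {x | ∀ i ∈ B, A.mulVec x i = 0} ∩
                {x | ∀ i ∈ N, A.mulVec x i ≤ 0}, s = nn (u - w)} /
            max (sInf {s | ∃ w ∈ {x | ∀ i ∈ B, A.mulVec x i = 0}, s = nn (u - w)})
                (sInf {s | ∃ w ∈ {x : Fin n → ℝ | ∀ i ∈ N, A.mulVec x i ≤ 0},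
                  s = nn (u - w)})} *
        max
          (sSup {r | ∃ u : Fin n → ℝ, (¬ ∀ i ∈ N, A.mulVec u i ≤ 0) ∧
            r = sInf {s | ∃ x, (∀ i ∈ N, A.mulVec x i ≤ 0) ∧ s = nn (u - x)} /
              nm (fun i => if i ∈ N then max (A.mulVec u i) 0 else 0)})
          (sSup {r | ∃ u : Fin n → ℝ, (¬ ∀ i ∈ B, A.mulVec u i ≤ 0) ∧
            r = sInf {s | ∃ x, (∀ i ∈ B, A.mulVec x i ≤ 0) ∧ s = nn (u - x)} /
              nm (fun i => if i ∈ B then max (A.mulVec u i) 0 else 0)}) := by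
  classical
  have htrick := gt_trick A B yhat hyhatpos hyhat0 hyhat
  have hpart1 : {x : Fin n → ℝ | ∀ i, A.mulVec x i ≤ 0} =
      {x | ∀ i ∈ B, A.mulVec x i = 0} ∩ {x | ∀ i ∈ N, A.mulVec x i ≤ 0} := by
    ext x
    constructor
    · intro hx
      exact ⟨htrick x (fun i _ => hx i), fun i _ => hx i⟩
    · rintro ⟨h1, h2⟩ i
      have hmem : i ∈ B ∪ N := by rw [hBN]; exact Finset.mem_univ i
      rcases Finset.mem_union.1 hmem with h | h
      · exact (h1 i h).le
      · exact h2 i h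
  refine ⟨hpart1, ?_⟩
  obtain ⟨cn, hcn, hcnb⟩ := seminorm_lower nn hnn
  obtain ⟨cm, hcm, hcmb⟩ := seminorm_lower nm hnm
  set L : Set (Fin n → ℝ) := {x | ∀ i ∈ B, A.mulVec x i = 0} with hL_def
  set K : Set (Fin n → ℝ) := {x | ∀ i ∈ N, A.mulVec x i ≤ 0} with hK_def
  set L₀ : Set (Fin n → ℝ) := {x | ∀ i ∈ B, A.mulVec x i ≤ 0} with hL0_def
  have hL0eq : L₀ = L := by
    ext x; exact ⟨fun h => htrick x h, fun h i hi => (h i hi).le⟩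
  have hLcl : IsClosed L := by
    have h : L = ⋂ i ∈ B, {x : Fin n → ℝ | A.mulVec x i = 0} := by
      rw [hL_def]; ext x; simp
    rw [h]
    exact isClosed_biInter fun i _ =>
      isClosed_eq (mulVec_continuous A i) continuous_const
  have hKcl : IsClosed K := by
    have h : K = ⋂ i ∈ N, {x : Fin n → ℝ | A.mulVec x i ≤ 0} := by
      rw [hK_def]; ext x; simp
    rw [h]
    exact isClosed_biInter fun i _ =>
      isClosed_le (mulVec_continuous A i) continuous_const
  have hxhatL : xhat ∈ L := hB
  have hxhatK : xhat ∈ K := fun i hi => (hN i hi).le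
  set SH := {r | ∃ u : Fin n → ℝ, u ∉ L ∩ K ∧
      r = dd nn u (L ∩ K) / max (dd nn u L) (dd nn u K)} with hSH_def
  set SN := {r | ∃ u : Fin n → ℝ, (¬ ∀ i ∈ N, A.mulVec u i ≤ 0) ∧
      r = dd nn u K / nm (fun i => if i ∈ N then max (A.mulVec u i) 0 else 0)}
    with hSN_def
  set SB := {r | ∃ u : Fin n → ℝ, (¬ ∀ i ∈ B, A.mulVec u i ≤ 0) ∧
      r = dd nn u L₀ / nm (fun i => if i ∈ B then max (A.mulVec u i) 0 else 0)}
    with hSB_def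
  -- the goal in dd language
  show sSup {r | ∃ u : Fin n → ℝ, (¬ ∀ i, A.mulVec u i ≤ 0) ∧
      r = sInf {s | ∃ x, (∀ i, A.mulVec x i ≤ 0) ∧ s = nn (u - x)} /
        nm (fun i => max (A.mulVec u i) 0)} ≤
    sSup SH * max (sSup SN) (sSup SB)
  -- nonnegativity of the sups
  have hSHnn : 0 ≤ sSup SH := by
    apply Real.sSup_nonneg
    rintro r ⟨u, _, rfl⟩
    exact div_nonneg (dd_nonneg nn u _) (le_trans (dd_nonneg nn u L) (le_max_left _ _))
  have hSNnn : 0 ≤ sSup SN := by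
    apply Real.sSup_nonneg
    rintro r ⟨u, _, rfl⟩
    exact div_nonneg (dd_nonneg nn u _) (apply_nonneg nm _)
  have hSBnn : 0 ≤ sSup SB := by
    apply Real.sSup_nonneg
    rintro r ⟨u, _, rfl⟩
    exact div_nonneg (dd_nonneg nn u _) (apply_nonneg nm _)
  have hMnn : 0 ≤ max (sSup SN) (sSup SB) := le_trans hSNnn (le_max_left _ _)
  have hbddN : BddAbove SN := by
    rcases N.eq_empty_or_nonempty with hNe | hNe
    · refine ⟨0, fun r hr => ?_⟩
      obtain ⟨u, hu, _⟩ := hr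
      exact absurd (fun i hi => absurd (hNe ▸ hi) (Finset.notMem_empty i)) hu
    · set δ : ℝ := N.inf' hNe (fun i => -(A.mulVec xhat i)) with hδ_def
      have hδ : 0 < δ := by
        rw [hδ_def, Finset.lt_inf'_iff]
        intro i hi
        linarith [hN i hi]
      have hxhδ : ∀ i ∈ N, A.mulVec xhat i ≤ -δ := by
        intro i hi
        have h := Finset.inf'_le (fun i => -(A.mulVec xhat i)) hi
        rw [← hδ_def] at h
        linarith [h]
      refine ⟨nn xhat / (δ * cm), fun r hr => ?_⟩
      obtain ⟨u, hu, rfl⟩ := hr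
      have hu' := hu
      push_neg at hu'
      obtain ⟨i₁, hi₁N, hi₁⟩ := hu'
      set g : ℝ := N.sup' hNe (fun i => max (A.mulVec u i) 0) with hg_def
      have hgb : ∀ i ∈ N, A.mulVec u i ≤ g := by
        intro i hi
        have h1 := Finset.le_sup' (fun i => max (A.mulVec u i) 0) hi
        rw [← hg_def] at h1
        exact le_trans (le_max_left _ _) h1
      have hg : 0 < g := lt_of_lt_of_le hi₁ (hgb i₁ hi₁N)
      obtain ⟨is, hisN, hiseq⟩ :=
        Finset.exists_mem_eq_sup' hNe (fun i => max (A.mulVec u i) 0)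
      set vN : Fin m → ℝ := (fun i => if i ∈ N then max (A.mulVec u i) 0 else 0)
        with hvN_def
      have hvNis : vN is = g := by
        rw [hvN_def]
        simp only [if_pos hisN]
        rw [hg_def, hiseq]
      have hρNlb : cm * g ≤ nm vN := by
        have h1 : g ≤ ‖vN‖ := by
          have := norm_le_pi_norm vN is
          rw [hvNis] at this
          calc g ≤ ‖g‖ := le_abs_self g
            _ ≤ ‖vN‖ := this
        calc cm * g ≤ cm * ‖vN‖ := mul_le_mul_of_nonneg_left h1 hcm.le
          _ ≤ nm vN := hcmb vN
      have hdK : dd nn u K ≤ g * nn xhat / δ := by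
        apply le_of_forall_pos_le_add
        intro ε hε
        obtain ⟨z, _, hzK, hznear⟩ :=
          slide A nn N u xhat δ g hδ hg hxhδ hgb ε hε
        calc dd nn u K ≤ nn (u - z) := dd_le nn u hzK
          _ ≤ ε + g * nn xhat / δ := hznear
          _ = g * nn xhat / δ + ε := by ring
      calc dd nn u K / nm vN ≤ (g * nn xhat / δ) / (cm * g) :=
            div_le_div₀ (by positivity) hdK (by positivity) hρNlb
        _ = nn xhat / (δ * cm) := by
            field_simp

  have hbddB : BddAbove SB := by
    rcases B.eq_empty_or_nonempty with hBe | hBe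
    · refine ⟨0, fun r hr => ?_⟩
      obtain ⟨u, hu, _⟩ := hr
      exact absurd (fun i hi => absurd (hBe ▸ hi) (Finset.notMem_empty i)) hu
    · obtain ⟨T, hT⟩ : ∃ T : (Fin n → ℝ) →ₗ[ℝ] (Fin m → ℝ),
          ∀ x i, T x i = if i ∈ B then A.mulVec x i else 0 := by
        refine ⟨{ toFun := fun x i => if i ∈ B then A.mulVec x i else 0,
                  map_add' := ?_, map_smul' := ?_ }, fun x i => rfl⟩
        · intro x y; ext i
          by_cases h : i ∈ B <;> simp [h, Matrix.mulVec_add]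
        · intro c x; ext i
          by_cases h : i ∈ B <;> simp [h, Matrix.mulVec_smul]
      obtain ⟨Sm, hSm⟩ := exists_section T
      obtain ⟨CS, hCS, hCSb⟩ := seminorm_upper (nn.comp Sm)
      set ymin : ℝ := B.inf' hBe yhat with hymin_def
      have hyminpos : 0 < ymin := by
        rw [hymin_def, Finset.lt_inf'_iff]
        exact hyhatpos
      set Ysum : ℝ := ∑ j ∈ B, yhat j with hYsum_def
      have hYsum0 : 0 ≤ Ysum := Finset.sum_nonneg fun j hj => (hyhatpos j hj).le
      have hQ0 : 0 ≤ Ysum / ymin := div_nonneg hYsum0 hyminpos.le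
      refine ⟨CS * ((1 + Ysum / ymin) / cm), fun r hr => ?_⟩
      obtain ⟨u, hu, rfl⟩ := hr
      have hu' := hu
      push_neg at hu'
      obtain ⟨i₂, hi₂B, hi₂⟩ := hu'
      set vB : Fin m → ℝ := (fun i => if i ∈ B then max (A.mulVec u i) 0 else 0)
        with hvB_def
      have hρB : 0 < nm vB := by
        rcases (apply_nonneg nm vB).lt_or_eq with h | h
        · exact h
        · exfalso
          have h0 := hnm _ h.symm
          have h1 := congrFun h0 i₂
          simp only [hvB_def, Pi.zero_apply, if_pos hi₂B] at h1
          have hle := le_max_left (A.mulVec u i₂) (0:ℝ)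
          rw [h1] at hle
          exact absurd hle (not_le.2 hi₂)
      set P : ℝ := nm vB / cm with hP_def
      have hP : 0 ≤ P := div_nonneg (apply_nonneg nm vB) hcm.le
      have hcomp : ∀ j ∈ B, max (A.mulVec u j) 0 ≤ P := by
        intro j hj
        have h1 : max (A.mulVec u j) 0 ≤ ‖vB‖ := by
          have h2 := norm_le_pi_norm vB j
          have h3 : vB j = max (A.mulVec u j) 0 := by rw [hvB_def]; simp [hj]
          rw [h3] at h2
          exact le_trans (le_abs_self _) h2
        rw [hP_def, le_div_iff₀ hcm]
        calc max (A.mulVec u j) 0 * cm = cm * max (A.mulVec u j) 0 := mul_comm _ _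
          _ ≤ cm * ‖vB‖ := mul_le_mul_of_nonneg_left h1 hcm.le
          _ ≤ nm vB := hcmb vB
      have hup : ∀ j ∈ B, A.mulVec u j ≤ P := fun j hj =>
        le_trans (le_max_left _ _) (hcomp j hj)
      have hsum0 := gt_sum A B yhat hyhat0 hyhat u
      -- bound on ‖T u‖
      have hTb : ‖T u‖ ≤ (1 + Ysum / ymin) * P := by
        have hbnd : 0 ≤ (1 + Ysum / ymin) * P := by positivity
        rw [pi_norm_le_iff_of_nonneg hbnd]
        intro i
        by_cases hiB : i ∈ B
        · rw [Real.norm_eq_abs, hT u i, if_pos hiB]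
          rw [abs_le]
          constructor
          · -- lower bound via yhat
            have hadd := Finset.add_sum_erase B
              (fun j => yhat j * A.mulVec u j) hiB
            have herase : ∑ j ∈ B.erase i, yhat j * A.mulVec u j ≤ Ysum * P := by
              calc ∑ j ∈ B.erase i, yhat j * A.mulVec u j
                  ≤ ∑ j ∈ B.erase i, yhat j * P := by
                    apply Finset.sum_le_sum
                    intro j hj
                    have hjB := Finset.mem_of_mem_erase hj
                    exact mul_le_mul_of_nonneg_left (hup j hjB) (hyhatpos j hjB).le
                _ ≤ ∑ j ∈ B, yhat j * P := by
                    apply Finset.sum_le_sum_of_subset_of_nonneg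
                      (Finset.erase_subset i B)
                    intro j hjB _
                    exact mul_nonneg (hyhatpos j hjB).le hP
                _ = Ysum * P := by rw [hYsum_def, Finset.sum_mul]
            have hadd' : yhat i * A.mulVec u i +
                ∑ j ∈ B.erase i, yhat j * A.mulVec u j
                = ∑ j ∈ B, yhat j * A.mulVec u j := hadd
            have h1 : -(Ysum * P) ≤ yhat i * A.mulVec u i := by linarith
            have hyi : 0 < yhat i := hyhatpos i hiB
            have hymini : ymin ≤ yhat i := Finset.inf'_le yhat hiB
            have hYsP : 0 ≤ Ysum * P := mul_nonneg hYsum0 hP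
            have h2 : -(Ysum * P) / yhat i ≤ A.mulVec u i := by
              rw [div_le_iff₀ hyi]
              calc -(Ysum * P) ≤ yhat i * A.mulVec u i := h1
                _ = A.mulVec u i * yhat i := mul_comm _ _
            have h3 : Ysum * P / yhat i ≤ Ysum * P / ymin :=
              div_le_div_of_nonneg_left hYsP hyminpos hymini
            have h4 : Ysum * P / ymin = Ysum / ymin * P := by ring
            have h5 : -(Ysum / ymin * P) ≤ -(Ysum * P) / yhat i := by
              rw [neg_div, ← h4]
              linarith
            calc -((1 + Ysum / ymin) * P) = -P + -(Ysum / ymin * P) := by ring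
              _ ≤ -(Ysum / ymin * P) := by linarith
              _ ≤ -(Ysum * P) / yhat i := h5
              _ ≤ A.mulVec u i := h2
          · have h2 : A.mulVec u i ≤ P := hup i hiB
            nlinarith [mul_nonneg hQ0 hP]
        · rw [hT u i, if_neg hiB]
          simpa using hbnd
      -- distance bound
      have hwL : (u - Sm (T u)) ∈ L₀ := by
        intro i hi
        have hT0 : T (u - Sm (T u)) = 0 := by
          rw [map_sub, hSm]; simp
        have h1 : T (u - Sm (T u)) i = 0 := by rw [hT0]; rfl
        rw [hT _ i, if_pos hi] at h1
        exact h1.le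
      have hdL0 : dd nn u L₀ ≤ nn (Sm (T u)) := by
        have h := dd_le nn u hwL
        have h2 : u - (u - Sm (T u)) = Sm (T u) := by abel
        rwa [h2] at h
      have hnnw : nn (Sm (T u)) ≤ CS * ‖T u‖ := by
        have := hCSb (T u)
        rwa [Seminorm.comp_apply] at this
      rw [div_le_iff₀ hρB]
      calc dd nn u L₀ ≤ nn (Sm (T u)) := hdL0
        _ ≤ CS * ‖T u‖ := hnnw
        _ ≤ CS * ((1 + Ysum / ymin) * P) := mul_le_mul_of_nonneg_left hTb hCS.le
        _ = CS * ((1 + Ysum / ymin) / cm) * nm vB := by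
            rw [hP_def]; ring

  have hbddH : BddAbove SH := by
    rcases N.eq_empty_or_nonempty with hNe | hNe
    · refine ⟨1, fun r hr => ?_⟩
      obtain ⟨u, hu, rfl⟩ := hr
      have hKuniv : K = Set.univ := by
        rw [hK_def]; ext x
        simp only [Set.mem_setOf_eq, Set.mem_univ, iff_true]
        intro i hi; exact absurd (hNe ▸ hi) (Finset.notMem_empty i)
      have hLK : L ∩ K = L := by rw [hKuniv, Set.inter_univ]
      have huL : u ∉ L := fun h => hu (by rw [hLK]; exact h)
      have hDpos : 0 < max (dd nn u L) (dd nn u K) :=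
        lt_max_of_lt_left (dd_pos nn u ⟨xhat, hxhatL⟩ hLcl huL hcn hcnb)
      rw [div_le_one hDpos, hLK]
      exact le_max_left _ _
    · set δ : ℝ := N.inf' hNe (fun i => -(A.mulVec xhat i)) with hδ_def
      have hδ : 0 < δ := by
        rw [hδ_def, Finset.lt_inf'_iff]
        intro i hi
        linarith [hN i hi]
      have hxhδ : ∀ i ∈ N, A.mulVec xhat i ≤ -δ := by
        intro i hi
        have h := Finset.inf'_le (fun i => -(A.mulVec xhat i)) hi
        rw [← hδ_def] at h
        linarith [h]
      set CA : ℝ := (∑ i, ∑ j, |A i j|) / cn with hCA_def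
      have hCA0 : 0 ≤ CA := by
        rw [hCA_def]
        apply div_nonneg _ hcn.le
        positivity
      have hrow : ∀ (i : Fin m) (v : Fin n → ℝ), |A.mulVec v i| ≤ CA * nn v := by
        intro i v
        rw [hCA_def]
        exact row_bound A nn cn hcn hcnb i v
      set CAx : ℝ := CA * nn xhat / δ with hCAx_def
      have hCAx0 : 0 ≤ CAx := by
        rw [hCAx_def]
        positivity
      refine ⟨2 * (1 + CAx), fun r hr => ?_⟩
      obtain ⟨u, hu, rfl⟩ := hr
      set dL : ℝ := dd nn u L with hdL_def
      set dK : ℝ := dd nn u K with hdK_def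
      have huLK : u ∉ L ∨ u ∉ K := by
        by_contra h
        push_neg at h
        exact hu ⟨h.1, h.2⟩
      have hD : 0 < max dL dK := by
        rcases huLK with h | h
        · exact lt_max_of_lt_left (dd_pos nn u ⟨xhat, hxhatL⟩ hLcl h hcn hcnb)
        · exact lt_max_of_lt_right (dd_pos nn u ⟨xhat, hxhatK⟩ hKcl h hcn hcnb)
      rw [div_le_iff₀ hD]
      apply le_of_forall_pos_le_add
      intro ε hε
      have h2CAx : (0:ℝ) < 2 + 2 * CAx := by linarith
      set ε1 : ℝ := ε / (2 + 2 * CAx) with hε1_def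
      have hε1 : 0 < ε1 := by positivity
      have hεeq : (2 + 2 * CAx) * ε1 = ε := by
        rw [hε1_def]
        field_simp
      obtain ⟨xL, hxLL, hxLd⟩ :=
        dd_exists_near nn u (Set.nonempty_of_mem hxhatL) hε1
      obtain ⟨xK, hxKK, hxKd⟩ :=
        dd_exists_near nn u (Set.nonempty_of_mem hxhatK) hε1
      rw [← hdL_def] at hxLd
      rw [← hdK_def] at hxKd
      have hdLD : dL ≤ max dL dK := le_max_left _ _
      have hdKD : dK ≤ max dL dK := le_max_right _ _
      have hAxL : ∀ i ∈ N, A.mulVec xL i ≤ CA * (dL + dK + 2 * ε1) := by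
        intro i hi
        have e1 : A.mulVec (u - xK) i = A.mulVec u i - A.mulVec xK i := by
          rw [Matrix.mulVec_sub]
          rfl
        have h1 : A.mulVec u i - A.mulVec xK i ≤ CA * nn (u - xK) := by
          have h := hrow i (u - xK)
          rw [e1] at h
          exact le_trans (le_abs_self _) h
        have e2 : A.mulVec (u - xL) i = A.mulVec u i - A.mulVec xL i := by
          rw [Matrix.mulVec_sub]
          rfl
        have h2 : A.mulVec xL i - A.mulVec u i ≤ CA * nn (u - xL) := by
          have h := hrow i (u - xL)
          rw [e2] at h
          have habs : A.mulVec xL i - A.mulVec u i ≤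
              |A.mulVec u i - A.mulVec xL i| := by
            rw [abs_sub_comm]
            exact le_abs_self _
          exact le_trans habs h
        have h3 : A.mulVec xK i ≤ 0 := hxKK i hi
        have h4 : CA * nn (u - xK) ≤ CA * (dK + ε1) :=
          mul_le_mul_of_nonneg_left hxKd.le hCA0
        have h5 : CA * nn (u - xL) ≤ CA * (dL + ε1) :=
          mul_le_mul_of_nonneg_left hxLd.le hCA0
        have hexp : CA * (dL + dK + 2 * ε1) = CA * (dK + ε1) + CA * (dL + ε1) := by
          ring
        linarith
      by_cases hg0 : ∀ i ∈ N, A.mulVec xL i ≤ 0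
      · have hddle : dd nn u (L ∩ K) ≤ nn (u - xL) := dd_le nn u ⟨hxLL, hg0⟩
        have hε1ε : ε1 ≤ ε := by
          rw [hε1_def, div_le_iff₀ h2CAx]
          nlinarith
        nlinarith [hD.le, hCAx0]
      · push_neg at hg0
        obtain ⟨i₃, hi₃N, hi₃⟩ := hg0
        set g : ℝ := N.sup' hNe (fun i => max (A.mulVec xL i) 0) with hg_def
        have hgb : ∀ i ∈ N, A.mulVec xL i ≤ g := by
          intro i hi
          have h1 := Finset.le_sup' (fun i => max (A.mulVec xL i) 0) hi
          rw [← hg_def] at h1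
          exact le_trans (le_max_left _ _) h1
        have hg : 0 < g := lt_of_lt_of_le hi₃ (hgb i₃ hi₃N)
        have hgG : g ≤ CA * (dL + dK + 2 * ε1) := by
          rw [hg_def]
          apply Finset.sup'_le
          intro i hi
          apply max_le (hAxL i hi)
          have hq1 : 0 ≤ dL := by rw [hdL_def]; exact dd_nonneg nn u L
          have hq2 : 0 ≤ dK := by rw [hdK_def]; exact dd_nonneg nn u K
          exact mul_nonneg hCA0 (by linarith [hε1.le])
        obtain ⟨z, ⟨s, t, hs0, hs1, ht0, hzeq⟩, hzK, hznear⟩ :=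
          slide A nn N xL xhat δ g hδ hg hxhδ hgb ε1 hε1
        have hzL : z ∈ L := by
          intro i hi
          have hAz : A.mulVec ((1 - s) • xL + (s * t) • xhat) i =
              (1 - s) * A.mulVec xL i + (s * t) * A.mulVec xhat i := by
            rw [Matrix.mulVec_add, Matrix.mulVec_smul, Matrix.mulVec_smul]
            simp [smul_eq_mul]
          rw [hzeq, hAz, hxLL i hi, hB i hi]
          ring
        have hddle : dd nn u (L ∩ K) ≤ nn (u - z) := dd_le nn u ⟨hzL, hzK⟩
        have htri : nn (u - z) ≤ nn (u - xL) + nn (xL - z) := by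
          have h : u - z = (u - xL) + (xL - z) := by abel
          rw [h]
          exact map_add_le_add nn _ _
        have hgnn : g * nn xhat / δ ≤ CAx * (dL + dK + 2 * ε1) := by
          have h1 : g * nn xhat / δ = g * (nn xhat / δ) := by ring
          have h2 : CAx * (dL + dK + 2 * ε1) =
              CA * (dL + dK + 2 * ε1) * (nn xhat / δ) := by
            rw [hCAx_def]; ring
          rw [h1, h2]
          exact mul_le_mul_of_nonneg_right hgG (by positivity)
        have hsum1 : CAx * (dL + dK + 2 * ε1) =
            CAx * (dL + dK) + 2 * CAx * ε1 := by ring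
        have hLK2D : CAx * (dL + dK) ≤ CAx * (max dL dK + max dL dK) :=
          mul_le_mul_of_nonneg_left (by linarith) hCAx0
        nlinarith [hddle, htri, hznear, hxLd.le, hgnn, hD.le, hCAx0, hεeq]

  apply Real.sSup_le _ (mul_nonneg hSHnn hMnn)
  rintro r ⟨u, hu, rfl⟩
  have hu' := hu
  push_neg at hu'
  obtain ⟨i₀, hi₀⟩ := hu'
  -- numerator in dd language
  have hnum : sInf {s | ∃ x, (∀ i, A.mulVec x i ≤ 0) ∧ s = nn (u - x)} =
      dd nn u (L ∩ K) := by
    unfold dd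
    congr 1
    ext s
    constructor
    · rintro ⟨x, hx, rfl⟩
      exact ⟨x, hpart1 ▸ (show x ∈ {x : Fin n → ℝ | ∀ i, A.mulVec x i ≤ 0} from hx), rfl⟩
    · rintro ⟨x, hx, rfl⟩
      refine ⟨x, ?_, rfl⟩
      have : x ∈ {x : Fin n → ℝ | ∀ i, A.mulVec x i ≤ 0} := hpart1 ▸ hx
      exact this
  rw [hnum]
  set ρ : ℝ := nm (fun i => max (A.mulVec u i) 0) with hρ_def
  have hρ : 0 < ρ := by
    rcases (apply_nonneg nm _).lt_or_eq with h | h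
    · exact h
    · exfalso
      have h0 := hnm _ h.symm
      have := congrFun h0 i₀
      simp only [Pi.zero_apply] at this
      have hle := le_max_left (A.mulVec u i₀) (0:ℝ)
      rw [this] at hle
      exact absurd hle (not_le.2 hi₀)
  have huS : u ∉ L ∩ K := by
    intro hmem
    have : ∀ i, A.mulVec u i ≤ 0 := (hpart1 ▸ hmem : u ∈ {x | ∀ i, A.mulVec x i ≤ 0})
    exact absurd (this i₀) (not_le.2 hi₀)
  have huLK : u ∉ L ∨ u ∉ K := by
    by_contra h
    push_neg at h
    exact huS ⟨h.1, h.2⟩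
  set dL := dd nn u L with hdL_def
  set dK := dd nn u K with hdK_def
  have hD : 0 < max dL dK := by
    rcases huLK with h | h
    · exact lt_max_of_lt_left (dd_pos nn u ⟨xhat, hxhatL⟩ hLcl h hcn hcnb)
    · exact lt_max_of_lt_right (dd_pos nn u ⟨xhat, hxhatK⟩ hKcl h hcn hcnb)
  -- the two factors
  have hle1 : dd nn u (L ∩ K) / max dL dK ≤ sSup SH :=
    le_csSup hbddH ⟨u, huS, rfl⟩
  -- D / ρ ≤ M
  have hKle : dK / ρ ≤ max (sSup SN) (sSup SB) := by
    by_cases hKU : ∀ i ∈ N, A.mulVec u i ≤ 0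
    · have : dK = 0 := dd_zero_of_mem nn hKU
      rw [this, zero_div]
      exact hMnn
    · have hKU' := hKU
      push_neg at hKU'
      obtain ⟨i₁, hi₁N, hi₁⟩ := hKU'
      set ρN : ℝ := nm (fun i => if i ∈ N then max (A.mulVec u i) 0 else 0) with hρN_def
      have hρN : 0 < ρN := by
        rcases (apply_nonneg nm _).lt_or_eq with h | h
        · exact h
        · exfalso
          have h0 := hnm _ h.symm
          have := congrFun h0 i₁
          simp only [Pi.zero_apply, if_pos hi₁N] at this
          have hle := le_max_left (A.mulVec u i₁) (0:ℝ)
          rw [this] at hle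
          exact absurd hle (not_le.2 hi₁)
      have hρNρ : ρN ≤ ρ := by
        apply hcompat
        intro i
        by_cases h : i ∈ N
        · simp [h]
        · simp [h, abs_nonneg, le_max_right]
      calc dK / ρ ≤ dK / ρN :=
            div_le_div_of_nonneg_left (dd_nonneg nn u K) hρN hρNρ
        _ ≤ sSup SN := le_csSup hbddN ⟨u, hKU, rfl⟩
        _ ≤ max (sSup SN) (sSup SB) := le_max_left _ _
  have hLle : dL / ρ ≤ max (sSup SN) (sSup SB) := by
    by_cases hBU : ∀ i ∈ B, A.mulVec u i ≤ 0
    · have huL : u ∈ L := htrick u hBU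
      have : dL = 0 := dd_zero_of_mem nn huL
      rw [this, zero_div]
      exact hMnn
    · have hBU' := hBU
      push_neg at hBU'
      obtain ⟨i₂, hi₂B, hi₂⟩ := hBU'
      set ρB : ℝ := nm (fun i => if i ∈ B then max (A.mulVec u i) 0 else 0) with hρB_def
      have hρB : 0 < ρB := by
        rcases (apply_nonneg nm _).lt_or_eq with h | h
        · exact h
        · exfalso
          have h0 := hnm _ h.symm
          have := congrFun h0 i₂
          simp only [Pi.zero_apply, if_pos hi₂B] at this
          have hle := le_max_left (A.mulVec u i₂) (0:ℝ)
          rw [this] at hle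
          exact absurd hle (not_le.2 hi₂)
      have hρBρ : ρB ≤ ρ := by
        apply hcompat
        intro i
        by_cases h : i ∈ B
        · simp [h]
        · simp [h, abs_nonneg, le_max_right]
      have hdLL0 : dL = dd nn u L₀ := by rw [hL0eq]
      calc dL / ρ ≤ dL / ρB :=
            div_le_div_of_nonneg_left (dd_nonneg nn u L) hρB hρBρ
        _ = dd nn u L₀ / ρB := by rw [hdLL0]
        _ ≤ sSup SB := le_csSup hbddB ⟨u, hBU, rfl⟩
        _ ≤ max (sSup SN) (sSup SB) := le_max_right _ _
  have hle2 : max dL dK / ρ ≤ max (sSup SN) (sSup SB) := by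
    rcases max_choice dL dK with h | h <;> rw [h]
    · exact hLle
    · exact hKle
  have hsplit : dd nn u (L ∩ K) / ρ =
      (dd nn u (L ∩ K) / max dL dK) * (max dL dK / ρ) := by
    field_simp
  rw [hsplit]
  exact mul_le_mul hle1 hle2 (div_nonneg (le_trans (dd_nonneg nn u L) (le_max_left _ _)) hρ.le) hSHnn
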